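/- arXiv:2505.00513 — 2 statements merged into one kernel-verified Lean document; each statement's English description precedes it below -/
import Mathlib

section
/- Let k be a commutative ring, G a group, H ≤ G a subgroup of finite index, and M a kG-module. If M has finite projective dimension over kG and the restriction of M to kH is projective, then M is projective as a kG-module. -/
open CategoryTheory Limits

noncomputable section

/-- `projDimLE R n M` means that the `R`-module `M` has projective dimension at most `n`. -/
def projDimLE (R : Type) [Ring R] : ℕ → ModuleCat R → Prop
  | 0, M => Projective M
  | (n+1), M => ∃ (P : ModuleCat R) (f : P ⟶ M), Projective P ∧ Function.Surjective f ∧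
      projDimLE R n (ModuleCat.of R (LinearMap.ker f.hom))

/-- The inclusion of group algebras `kH → kG` induced by the inclusion of a subgroup `H ≤ G`. -/
def grpAlgInc (k : Type) [CommRing k] (G : Type) [Group G] (H : Subgroup G) :
    MonoidAlgebra k H →+* MonoidAlgebra k G :=
  MonoidAlgebra.mapDomainRingHom k H.subtype

namespace StatementAux

variable (k : Type) [CommRing k] (G : Type) [Group G] (H : Subgroup G)

local notation "R" => MonoidAlgebra k G
local notation "S" => MonoidAlgebra k H
local notation "φ" => grpAlgInc k G H

lemma grpAlgInc_single (h : H) (a : k) :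
    grpAlgInc k G H (MonoidAlgebra.single h a) = MonoidAlgebra.single (h : G) a := by
  simp [grpAlgInc]

open Classical in
/-- The `k`-linear projection of `kG` onto the coefficients supported on `H`. -/
def projH : R →ₗ[k] R :=
  (Finsupp.lsum k fun g => if g ∈ H then (MonoidAlgebra.lsingle g : k →ₗ[k] R) else 0) ∘ₗ
    (MonoidAlgebra.coeffLinearEquiv k).toLinearMap

open Classical in
lemma projH_single (g : G) (a : k) :
    projH k G H (MonoidAlgebra.single g a) =
      if g ∈ H then MonoidAlgebra.single g a else 0 := by
  have hc : (MonoidAlgebra.coeffLinearEquiv k) (MonoidAlgebra.single g a) =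
      Finsupp.single g a := rfl
  rw [projH, LinearMap.comp_apply, LinearEquiv.coe_coe, hc, Finsupp.lsum_single]
  split_ifs <;> simp [MonoidAlgebra.lsingle_apply]

lemma projH_single_mul (h : G) (hh : h ∈ H) (b : k) (x : R) :
    projH k G H (MonoidAlgebra.single h b * x) =
      MonoidAlgebra.single h b * projH k G H x := by
  induction x using MonoidAlgebra.induction_linear with
  | zero => simp
  | add f g hf hg => rw [mul_add, map_add, hf, hg, map_add, mul_add]
  | single g a =>
      show projH k G H (MonoidAlgebra.single h b * MonoidAlgebra.single g a) = _
      rw [MonoidAlgebra.single_mul_single, projH_single, projH_single]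
      by_cases hg : g ∈ H
      · rw [if_pos hg, if_pos (H.mul_mem_cancel_left hh |>.mpr hg),
          MonoidAlgebra.single_mul_single]
      · rw [if_neg hg, if_neg (fun hc => hg ((H.mul_mem_cancel_left hh).mp hc)), mul_zero]

lemma projH_partition [Fintype (G ⧸ H)] (x : R) :
    ∑ c : G ⧸ H, (MonoidAlgebra.single c.out (1:k) : MonoidAlgebra k G) *
      projH k G H (MonoidAlgebra.single (c.out⁻¹ : G) (1:k) * x) = x := by
  induction x using MonoidAlgebra.induction_linear with
  | zero => simp
  | add f g hf hg =>
      simp only [mul_add, map_add]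
      rw [Finset.sum_add_distrib, hf, hg]
  | single g a =>
      classical
      have key : ∀ c : G ⧸ H,
          (MonoidAlgebra.single c.out (1:k) : MonoidAlgebra k G) *
            projH k G H (MonoidAlgebra.single (c.out⁻¹ : G) (1:k) *
              MonoidAlgebra.single g a) =
          if c = QuotientGroup.mk g then MonoidAlgebra.single g a else 0 := by
        intro c
        rw [MonoidAlgebra.single_mul_single, projH_single]
        by_cases hc : c.out⁻¹ * g ∈ H
        · have : c = QuotientGroup.mk g := by
            rw [← QuotientGroup.out_eq' c]
            exact QuotientGroup.eq.mpr hc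
          rw [if_pos hc, if_pos this, MonoidAlgebra.single_mul_single, one_mul, one_mul,
            mul_inv_cancel_left]
        · have : ¬ c = QuotientGroup.mk g := by
            intro hc'
            apply hc
            apply QuotientGroup.eq.mp
            rw [QuotientGroup.out_eq' c, hc']
          rw [if_neg hc, if_neg this, mul_zero]
      rw [Finset.sum_congr rfl (fun c _ => key c)]
      simp


universe v

/-- `single 1 a` is central in the monoid algebra. -/
lemma single_one_comm (a : k) (x : R) :
    MonoidAlgebra.single (1 : G) a * x = x * MonoidAlgebra.single (1 : G) a := by
  induction x using MonoidAlgebra.induction_linear with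
  | zero => simp
  | add f g hf hg => rw [mul_add, add_mul, hf, hg]
  | single g b =>
      show MonoidAlgebra.single (1:G) a * MonoidAlgebra.single g b = _
      rw [MonoidAlgebra.single_mul_single, MonoidAlgebra.single_mul_single,
        one_mul, mul_one, mul_comm]

variable {ι : Type v}

/-- The projection on each coefficient of a free module over the group algebra. -/
def projF : (ι →₀ R) →ₗ[k] (ι →₀ R) :=
  Finsupp.mapRange.linearMap (projH k G H)

lemma projF_single (i : ι) (x : R) :
    projF k G H (Finsupp.single i x) = Finsupp.single i (projH k G H x) := by
  simp [projF]

lemma projF_smul_comm (h : G) (hh : h ∈ H) (b : k) (w : ι →₀ R) :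
    projF k G H (MonoidAlgebra.single h b • w) =
      MonoidAlgebra.single h b • projF k G H w := by
  induction w using Finsupp.induction_linear with
  | zero => simp
  | add f g hf hg => rw [smul_add, map_add, hf, hg, map_add, smul_add]
  | single i x =>
      rw [Finsupp.smul_single, projF_single, projF_single, Finsupp.smul_single,
        smul_eq_mul, smul_eq_mul, projH_single_mul k G H h hh]

lemma projF_partition [Fintype (G ⧸ H)] (w : ι →₀ R) :
    ∑ c : G ⧸ H, (MonoidAlgebra.single c.out (1:k) : MonoidAlgebra k G) •
      projF k G H ((MonoidAlgebra.single (c.out⁻¹ : G) (1:k) : MonoidAlgebra k G) • w) = w := by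
  induction w using Finsupp.induction_linear with
  | zero => simp
  | add f g hf hg =>
      simp only [smul_add, map_add]
      rw [Finset.sum_add_distrib, hf, hg]
  | single i x =>
      have : ∀ c : G ⧸ H, (MonoidAlgebra.single c.out (1:k) : MonoidAlgebra k G) •
          projF k G H ((MonoidAlgebra.single (c.out⁻¹ : G) (1:k) : MonoidAlgebra k G) •
            Finsupp.single i x) =
          Finsupp.single i ((MonoidAlgebra.single c.out (1:k) : MonoidAlgebra k G) *
            projH k G H (MonoidAlgebra.single (c.out⁻¹ : G) (1:k) * x)) := by
        intro c
        rw [Finsupp.smul_single, projF_single, Finsupp.smul_single, smul_eq_mul, smul_eq_mul]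
      rw [Finset.sum_congr rfl (fun c _ => this c), ← Finsupp.single_finset_sum,
        projH_partition k G H x]


/-- The right coset space `H \\ G`. -/
abbrev Qr := _root_.Quotient (QuotientGroup.rightRel H)

/-- The right coset of an element. -/
abbrev mkr (g : G) : Qr G H := Quotient.mk (QuotientGroup.rightRel H) g

lemma hpart_mem (g : G) : g * (mkr G H g).out⁻¹ ∈ H := by
  have h := Quotient.mk_out (s := QuotientGroup.rightRel H) g
  rwa [QuotientGroup.rightRel_apply] at h

/-- The `H`-part of `g` relative to the chosen coset representative. -/
def hpart (g : G) : H := ⟨g * (mkr G H g).out⁻¹, hpart_mem G H g⟩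

lemma mkr_mul_mem (h : H) (g : G) : mkr G H ((h : G) * g) = mkr G H g := by
  exact Quotient.sound (QuotientGroup.rightRel_apply.mpr (by simpa using h.2))

lemma hpart_mul (h : H) (g : G) : hpart G H ((h : G) * g) = h * hpart G H g := by
  apply Subtype.ext
  show (h : G) * g * (mkr G H ((h:G) * g)).out⁻¹ = (h : G) * (g * (mkr G H g).out⁻¹)
  rw [mkr_mul_mem, mul_assoc]

/-- The underlying `k`-linear map realizing `kG`-free modules as `kH`-free. -/
def resFreeU (ι : Type v) : (ι →₀ R) →ₗ[k] ((ι × Qr G H) →₀ S) :=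
  Finsupp.lsum k fun i => (Finsupp.lsum k fun g =>
    (Finsupp.lsingle (i, mkr G H g) : S →ₗ[k] ((ι × Qr G H) →₀ S)).comp
      (MonoidAlgebra.lsingle (hpart G H g) : k →ₗ[k] S)) ∘ₗ
    (MonoidAlgebra.coeffLinearEquiv k).toLinearMap

lemma resFreeU_single (ι : Type v) (i : ι) (g : G) (a : k) :
    resFreeU k G H ι (Finsupp.single i (MonoidAlgebra.single g a)) =
      Finsupp.single (i, mkr G H g) (MonoidAlgebra.single (hpart G H g) a) := by
  have hc : (MonoidAlgebra.coeffLinearEquiv k) (MonoidAlgebra.single g a) =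
      Finsupp.single g a := rfl
  rw [resFreeU, Finsupp.lsum_single, LinearMap.comp_apply, LinearEquiv.coe_coe, hc,
    Finsupp.lsum_single]
  rfl

theorem resFree_projective (ι : Type v) :
    Module.Projective (MonoidAlgebra k H) ((ModuleCat.restrictScalars (grpAlgInc k G H)).obj
      (ModuleCat.of (MonoidAlgebra k G) (ι →₀ MonoidAlgebra k G))) := by
  set X := (ModuleCat.restrictScalars (grpAlgInc k G H)).obj
      (ModuleCat.of (MonoidAlgebra k G) (ι →₀ MonoidAlgebra k G)) with hX
  -- the `kH`-linear splitting maps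
  let uS : X →ₗ[S] ((ι × Qr G H) →₀ S) :=
    { toFun := resFreeU k G H ι
      map_add' := (resFreeU k G H ι).map_add
      map_smul' := by
        intro c w
        revert w
        show ∀ w : ι →₀ MonoidAlgebra k G,
          resFreeU k G H ι ((grpAlgInc k G H c) • w) = c • resFreeU k G H ι w
        intro w
        induction c using MonoidAlgebra.induction_linear with
        | zero => simp
        | add c₁ c₂ h₁ h₂ => rw [map_add, add_smul, map_add, h₁, h₂, add_smul]
        | single h b =>
          induction w using Finsupp.induction_linear with
          | zero => simp
          | add w₁ w₂ hw₁ hw₂ => rw [smul_add, map_add, hw₁, hw₂, map_add, smul_add]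
          | single i x =>
            induction x using MonoidAlgebra.induction_linear with
            | zero => simp
            | add x₁ x₂ hx₁ hx₂ =>
                rw [Finsupp.single_add, smul_add, map_add, hx₁, hx₂, map_add, smul_add]
            | single g a =>
                rw [grpAlgInc_single, Finsupp.smul_single, smul_eq_mul,
                  MonoidAlgebra.single_mul_single]
                erw [resFreeU_single, resFreeU_single]
                rw [Finsupp.smul_single, smul_eq_mul, MonoidAlgebra.single_mul_single,
                  mkr_mul_mem, hpart_mul] }
  let vS : ((ι × Qr G H) →₀ S) →ₗ[S] X :=
    Finsupp.linearCombination S fun p =>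
      (Finsupp.single p.1 (MonoidAlgebra.single p.2.out (1:k)) : ι →₀ R)
  have hsplit : vS.comp uS = LinearMap.id := by
    apply LinearMap.ext
    intro w
    revert w
    show ∀ w : ι →₀ MonoidAlgebra k G, vS (resFreeU k G H ι w) = w
    intro w
    induction w using Finsupp.induction_linear with
    | zero => simp; rfl
    | add w₁ w₂ h₁ h₂ => rw [map_add, map_add, h₁, h₂]; rfl
    | single i x =>
      induction x using MonoidAlgebra.induction_linear with
      | zero => simp; rfl
      | add x₁ x₂ h₁ h₂ =>
          rw [Finsupp.single_add, map_add, map_add, h₁, h₂]; rfl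
      | single g a =>
          rw [resFreeU_single]
          simp only [vS]
          erw [Finsupp.linearCombination_single]
          show (grpAlgInc k G H (MonoidAlgebra.single (hpart G H g) a)) •
              (Finsupp.single i (MonoidAlgebra.single (Quotient.out (mkr G H g)) (1:k))
                : ι →₀ MonoidAlgebra k G) = _
          rw [grpAlgInc_single, Finsupp.smul_single,
            smul_eq_mul, MonoidAlgebra.single_mul_single, mul_one]
          show Finsupp.single i (MonoidAlgebra.single (g * (mkr G H g).out⁻¹ * (mkr G H g).out) a)
            = Finsupp.single i (MonoidAlgebra.single g a)
          rw [inv_mul_cancel_right]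
  exact Module.Projective.of_split uS vS hsplit


/-- Restriction of a projective `kG`-module to `kH` is projective. -/
theorem res_projective (N : ModuleCat.{v} (MonoidAlgebra k G)) (hN : Module.Projective (MonoidAlgebra k G) N) :
    Module.Projective (MonoidAlgebra k H) ((ModuleCat.restrictScalars (grpAlgInc k G H)).obj N) := by
  obtain ⟨s, hs⟩ := hN.out
  let F := ModuleCat.of (MonoidAlgebra k G) ((N : Type v) →₀ MonoidAlgebra k G)
  let sHom : N ⟶ F := ModuleCat.ofHom s
  let tHom : F ⟶ N := ModuleCat.ofHom (Finsupp.linearCombination _ id)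
  haveI := resFree_projective k G H (N : Type v)
  exact Module.Projective.of_split ((ModuleCat.restrictScalars (grpAlgInc k G H)).map sHom).hom
    ((ModuleCat.restrictScalars (grpAlgInc k G H)).map tHom).hom
    (LinearMap.ext fun x => hs x)

lemma smul_smul_single (g g' : G) {V : Type v} [AddCommGroup V]
    [Module (MonoidAlgebra k G) V] (v : V) :
    (MonoidAlgebra.single g (1:k)) • (MonoidAlgebra.single g' (1:k)) • v =
      (MonoidAlgebra.single (g * g') (1:k)) • v := by
  rw [← mul_smul, MonoidAlgebra.single_mul_single, one_mul]

/-- The key extension lemma: a `kG`-map from a `kH`-split submodule into a free module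
extends to the big module. -/
theorem extend_from_sub [H.FiniteIndex] {P K : ModuleCat.{v} (MonoidAlgebra k G)} (ι : Type v)
    (incl : K ⟶ P)
    (ρ' : (ModuleCat.restrictScalars (grpAlgInc k G H)).obj P ⟶
      (ModuleCat.restrictScalars (grpAlgInc k G H)).obj K)
    (hρ : ∀ x : K, ρ' (incl x) = x)
    (i : K ⟶ ModuleCat.of (MonoidAlgebra k G) (ι →₀ MonoidAlgebra k G)) :
    ∃ j : P ⟶ ModuleCat.of (MonoidAlgebra k G) (ι →₀ MonoidAlgebra k G),
      ∀ x : K, j (incl x) = i x := by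
  haveI : Fintype (G ⧸ H) := Fintype.ofFinite _
  -- `ρ'` commutes with scalars from `H`
  have resmul : ∀ (h : H) (a : k) (q : P),
      ρ' ((MonoidAlgebra.single (h : G) a : MonoidAlgebra k G) • q) =
        (MonoidAlgebra.single (h : G) a : MonoidAlgebra k G) • ρ' q := by
    intro h a q
    have h1 : ρ' (grpAlgInc k G H (MonoidAlgebra.single h a) • q) =
        grpAlgInc k G H (MonoidAlgebra.single h a) • ρ' q :=
      (ConcreteCategory.hom ρ').map_smul (MonoidAlgebra.single h a) q
    rwa [grpAlgInc_single] at h1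
  set jfun : P → (ι →₀ MonoidAlgebra k G) := fun p =>
    ∑ c : G ⧸ H, (MonoidAlgebra.single c.out (1:k) : MonoidAlgebra k G) •
      projF k G H (i (ρ' ((MonoidAlgebra.single (c.out⁻¹ : G) (1:k) : MonoidAlgebra k G) • p)))
    with hjfun
  have hadd : ∀ p q : P, i (ρ' (p + q)) = i (ρ' p) + i (ρ' q) := fun p q => by
    exact (congrArg (ConcreteCategory.hom i) ((ConcreteCategory.hom ρ').map_add p q)).trans
      (map_add (ConcreteCategory.hom i) _ _)
  have hzero : i (ρ' (0 : P)) = 0 := by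
    exact (congrArg (ConcreteCategory.hom i) (ConcreteCategory.hom ρ').map_zero).trans
      (map_zero (ConcreteCategory.hom i))
  have jadd : ∀ p q, jfun (p + q) = jfun p + jfun q := by
    intro p q
    simp only [hjfun, smul_add, hadd, map_add, Finset.sum_add_distrib]
  -- commutes with the action of group elements
  have hG : ∀ (u : G) (p : P),
      jfun ((MonoidAlgebra.single u (1:k) : MonoidAlgebra k G) • p) =
        (MonoidAlgebra.single u (1:k) : MonoidAlgebra k G) • jfun p := by
    intro u p
    have term : ∀ c : G ⧸ H,
        (MonoidAlgebra.single (u • c).out (1:k) : MonoidAlgebra k G) •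
          projF k G H (i (ρ' ((MonoidAlgebra.single (((u • c).out)⁻¹ : G) (1:k) :
            MonoidAlgebra k G) • ((MonoidAlgebra.single u (1:k) : MonoidAlgebra k G) • p)))) =
        (MonoidAlgebra.single u (1:k) : MonoidAlgebra k G) •
          ((MonoidAlgebra.single c.out (1:k) : MonoidAlgebra k G) •
            projF k G H (i (ρ' ((MonoidAlgebra.single ((c.out⁻¹ : G)) (1:k) :
              MonoidAlgebra k G) • p)))) := by
      intro c
      have hc : (((u • c).out : G) : G ⧸ H) = ((u * c.out : G) : G ⧸ H) := by
        rw [QuotientGroup.out_eq']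
        have h2 := MulAction.Quotient.mk_smul_out H u c
        rw [smul_eq_mul] at h2
        exact h2.symm
      have hmem : ((u • c).out)⁻¹ * (u * c.out) ∈ H := QuotientGroup.eq.mp hc
      set hH : H := ⟨((u • c).out)⁻¹ * (u * c.out), hmem⟩ with hhH
      have e1 : ((u • c).out)⁻¹ * u = (hH : G) * c.out⁻¹ := by
        show _ = ((u • c).out)⁻¹ * (u * c.out) * c.out⁻¹
        rw [mul_assoc, mul_inv_cancel_right]
      have e2 : (u • c).out * (hH : G) = u * c.out := by
        show (u • c).out * (((u • c).out)⁻¹ * (u * c.out)) = _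
        rw [mul_inv_cancel_left]
      rw [smul_smul_single, e1, ← smul_smul_single, resmul]
      erw [(ConcreteCategory.hom i).map_smul]
      rw [projF_smul_comm k G H _ hH.2, smul_smul_single, e2, ← smul_smul_single]
    rw [hjfun]
    beta_reduce
    rw [Finset.smul_sum]
    exact (Fintype.sum_bijective _ (MulAction.bijective u) _ _ (fun c => (term c).symm)).symm
  -- commutes with the action of scalars from `k`
  have hk : ∀ (a : k) (p : P),
      jfun ((MonoidAlgebra.single (1 : G) a : MonoidAlgebra k G) • p) =
        (MonoidAlgebra.single (1 : G) a : MonoidAlgebra k G) • jfun p := by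
    intro a p
    have comm1 : ∀ (g : G) (q : P),
        (MonoidAlgebra.single g (1:k) : MonoidAlgebra k G) •
          ((MonoidAlgebra.single (1:G) a : MonoidAlgebra k G) • q) =
        (MonoidAlgebra.single (1:G) a : MonoidAlgebra k G) •
          ((MonoidAlgebra.single g (1:k) : MonoidAlgebra k G) • q) := by
      intro g q
      rw [← mul_smul, ← single_one_comm, mul_smul]
    have comm2 : ∀ (g : G) (w : ι →₀ MonoidAlgebra k G),
        (MonoidAlgebra.single g (1:k) : MonoidAlgebra k G) •
          ((MonoidAlgebra.single (1:G) a : MonoidAlgebra k G) • w) =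
        (MonoidAlgebra.single (1:G) a : MonoidAlgebra k G) •
          ((MonoidAlgebra.single g (1:k) : MonoidAlgebra k G) • w) := by
      intro g w
      rw [← mul_smul, ← single_one_comm, mul_smul]
    have hone : (MonoidAlgebra.single (1 : G) a : MonoidAlgebra k G) =
        MonoidAlgebra.single ((1 : H) : G) a := by norm_num
    have term : ∀ c : G ⧸ H,
        (MonoidAlgebra.single c.out (1:k) : MonoidAlgebra k G) •
          projF k G H (i (ρ' ((MonoidAlgebra.single ((c.out⁻¹ : G)) (1:k) :
            MonoidAlgebra k G) • ((MonoidAlgebra.single (1:G) a : MonoidAlgebra k G) • p)))) =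
        (MonoidAlgebra.single (1:G) a : MonoidAlgebra k G) •
          ((MonoidAlgebra.single c.out (1:k) : MonoidAlgebra k G) •
            projF k G H (i (ρ' ((MonoidAlgebra.single ((c.out⁻¹ : G)) (1:k) :
              MonoidAlgebra k G) • p)))) := by
      intro c
      rw [comm1, hone, resmul]
      erw [(ConcreteCategory.hom i).map_smul]
      rw [← hone,
        projF_smul_comm k G H _ H.one_mem, comm2]
    rw [hjfun]
    beta_reduce
    rw [Finset.sum_congr rfl (fun c _ => term c), ← Finset.smul_sum]
  have jsmul : ∀ (r : MonoidAlgebra k G) (p : P), jfun (r • p) = r • jfun p := by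
    intro r p
    induction r using MonoidAlgebra.induction_linear with
    | zero => rw [zero_smul, zero_smul]
              have : jfun 0 = 0 := by simp [hjfun, hzero]
              rw [this]
    | add r₁ r₂ h₁ h₂ => rw [add_smul, jadd, h₁, h₂, add_smul]
    | single g a =>
        have hdecomp : (MonoidAlgebra.single g a : MonoidAlgebra k G) =
            MonoidAlgebra.single (1:G) a * MonoidAlgebra.single g (1:k) := by
          rw [MonoidAlgebra.single_mul_single, one_mul, mul_one]
        show jfun ((MonoidAlgebra.single g a : MonoidAlgebra k G) • p) =
          (MonoidAlgebra.single g a : MonoidAlgebra k G) • jfun p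
        rw [hdecomp, mul_smul, hk, hG, ← mul_smul]
  refine ⟨ModuleCat.ofHom { toFun := jfun, map_add' := jadd, map_smul' := jsmul }, ?_⟩
  intro x
  show jfun (incl x) = i x
  have term : ∀ c : G ⧸ H,
      (MonoidAlgebra.single c.out (1:k) : MonoidAlgebra k G) •
        projF k G H (i (ρ' ((MonoidAlgebra.single ((c.out⁻¹ : G)) (1:k) :
          MonoidAlgebra k G) • (incl x)))) =
      (MonoidAlgebra.single c.out (1:k) : MonoidAlgebra k G) •
        projF k G H ((MonoidAlgebra.single ((c.out⁻¹ : G)) (1:k) :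
          MonoidAlgebra k G) • i x) := by
    intro c
    rw [← (ConcreteCategory.hom incl).map_smul, hρ, (ConcreteCategory.hom i).map_smul]
  rw [hjfun]
  beta_reduce
  rw [Finset.sum_congr rfl (fun c _ => term c)]
  exact projF_partition k G H (i x)

end StatementAux

/-- If `H ≤ G` has finite index and a `kG`-module `M` has finite projective dimension over `kG`
while its restriction to `kH` is projective, then `M` is projective over `kG`. -/
theorem statement1 (k : Type) [CommRing k] (G : Type) [Group G] (H : Subgroup G)
    [H.FiniteIndex] (M : ModuleCat (MonoidAlgebra k G)) (n : ℕ)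
    (hfin : projDimLE (MonoidAlgebra k G) n M)
    (hres : Projective ((ModuleCat.restrictScalars (grpAlgInc k G H)).obj M)) :
    Projective M := by
  induction n generalizing M with
  | zero => exact hfin
  | succ n ih =>
    obtain ⟨P, f, hP, hf, hker⟩ := hfin
    have hPmod : Module.Projective (MonoidAlgebra k G) P :=
      (IsProjective.iff_projective _).mpr hP
    have hMres : Module.Projective (MonoidAlgebra k H)
        ((ModuleCat.restrictScalars (grpAlgInc k G H)).obj M) :=
      (IsProjective.iff_projective _).mpr hres
    obtain ⟨s, hs⟩ := Module.projective_lifting_property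
      ((ModuleCat.restrictScalars (grpAlgInc k G H)).map f).hom
      (LinearMap.id : (ModuleCat.restrictScalars (grpAlgInc k G H)).obj M →ₗ[MonoidAlgebra k H]
        (ModuleCat.restrictScalars (grpAlgInc k G H)).obj M)
      (fun m => hf m)
    set K := ModuleCat.of (MonoidAlgebra k G) (LinearMap.ker f.hom) with hK
    let incl : K ⟶ P := ModuleCat.ofHom (LinearMap.ker f.hom).subtype
    let d : (ModuleCat.restrictScalars (grpAlgInc k G H)).obj P →ₗ[MonoidAlgebra k H]
        (ModuleCat.restrictScalars (grpAlgInc k G H)).obj P :=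
      LinearMap.id - s.comp ((ModuleCat.restrictScalars (grpAlgInc k G H)).map f).hom
    let toP' : ↑P → ↑((ModuleCat.restrictScalars (grpAlgInc k G H)).obj P) :=
      fun p => p
    have h2 : ∀ m, ((ModuleCat.restrictScalars (grpAlgInc k G H)).map f) (s m) = m :=
      fun m => congrArg (fun t => t m) hs
    have hd : ∀ p : P, ((ModuleCat.restrictScalars (grpAlgInc k G H)).map f) (d p) = 0 := by
      intro p
      show ((ModuleCat.restrictScalars (grpAlgInc k G H)).map f) (toP' p -
        (s ∘ₗ ((ModuleCat.restrictScalars (grpAlgInc k G H)).map f).hom) (toP' p)) = 0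
      rw [map_sub, LinearMap.comp_apply, h2]
      exact sub_self _
    let ρ' : (ModuleCat.restrictScalars (grpAlgInc k G H)).obj P ⟶
        (ModuleCat.restrictScalars (grpAlgInc k G H)).obj K :=
      ModuleCat.ofHom (X := ↑((ModuleCat.restrictScalars (grpAlgInc k G H)).obj P))
        (Y := ↑((ModuleCat.restrictScalars (grpAlgInc k G H)).obj K)) <|
      { toFun := fun p => ⟨d p, LinearMap.mem_ker.mpr (hd p)⟩
        map_add' := fun p q => Subtype.ext (d.map_add p q)
        map_smul' := fun c p => Subtype.ext (d.map_smul c p) }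
    have hρ : ∀ x : K, ρ' (incl x) = x := by
      intro x
      apply Subtype.ext
      show d (incl x) = x.1
      have h4 : d (incl x) = toP' (incl x) -
          s (((ModuleCat.restrictScalars (grpAlgInc k G H)).map f) (incl x)) := rfl
      have h6 : ((ModuleCat.restrictScalars (grpAlgInc k G H)).map f) (incl x) = 0 := x.2
      rw [h4, h6, map_zero, sub_zero]
      rfl
    haveI hresP := StatementAux.res_projective k G H P hPmod
    have hresK : Module.Projective (MonoidAlgebra k H)
        ((ModuleCat.restrictScalars (grpAlgInc k G H)).obj K) := by
      exact Module.Projective.of_split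
        (M := ↑((ModuleCat.restrictScalars (grpAlgInc k G H)).obj P))
        ((ModuleCat.restrictScalars (grpAlgInc k G H)).map incl).hom ρ'.hom
        (LinearMap.ext fun x => hρ x)
    have hiff := @IsProjective.iff_projective (MonoidAlgebra k H) _ _
      (↑((ModuleCat.restrictScalars (grpAlgInc k G H)).obj K)) _ _
    have hKproj : Projective K := ih K hker (hiff.mp hresK)
    have hKmod : Module.Projective (MonoidAlgebra k G) K :=
      (IsProjective.iff_projective _).mpr hKproj
    obtain ⟨iK, hiK⟩ := hKmod.out
    obtain ⟨j, hj⟩ := StatementAux.extend_from_sub k G H (K : Type _) incl ρ' hρ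
      (ModuleCat.ofHom iK : K ⟶ ModuleCat.of (MonoidAlgebra k G) ((K : Type _) →₀ MonoidAlgebra k G))
    let q : P →ₗ[MonoidAlgebra k G] K :=
      (Finsupp.linearCombination (MonoidAlgebra k G) id).comp
        (j.hom : P →ₗ[MonoidAlgebra k G] ((K : Type _) →₀ MonoidAlgebra k G))
    have hq : ∀ x : K, q (incl x) = x := by
      intro x
      show Finsupp.linearCombination (MonoidAlgebra k G) id (j (incl x)) = x
      rw [hj]
      exact hiK x
    let e : P →ₗ[MonoidAlgebra k G] P :=
      LinearMap.id - (LinearMap.ker f.hom).subtype.comp q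
    have he : ∀ x : P, x ∈ LinearMap.ker f.hom → e x = 0 := by
      intro x hx
      show x - (q x).1 = 0
      have : q x = (⟨x, hx⟩ : LinearMap.ker f.hom) := hq ⟨x, hx⟩
      rw [this]
      exact sub_self x
    have hfe : ∀ p : P, f (e p) = f p := by
      intro p
      show f (p - (q p).1) = f p
      have h0 : f (q p).1 = 0 := (q p).2
      rw [map_sub, h0, sub_zero]
    have key : ∀ p p' : P, f p = f p' → e p = e p' := by
      intro p p' hpp
      have hm : p - p' ∈ LinearMap.ker f.hom := by
        rw [LinearMap.mem_ker, map_sub, hpp, sub_self]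
      have h0 := he _ hm
      rw [map_sub, sub_eq_zero] at h0
      exact h0
    let σ : M →ₗ[MonoidAlgebra k G] P :=
      { toFun := fun m => e (Function.surjInv hf m)
        map_add' := by
          intro m m'
          show e (Function.surjInv hf (m + m')) =
            e (Function.surjInv hf m) + e (Function.surjInv hf m')
          rw [key (Function.surjInv hf (m + m')) (Function.surjInv hf m + Function.surjInv hf m')
            (by rw [map_add, Function.surjInv_eq hf, Function.surjInv_eq hf,
              Function.surjInv_eq hf]), map_add]
        map_smul' := by
          intro c m
          show e (Function.surjInv hf (c • m)) = c • e (Function.surjInv hf m)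
          rw [key (Function.surjInv hf (c • m)) (c • Function.surjInv hf m)
            (by rw [map_smul, Function.surjInv_eq hf, Function.surjInv_eq hf]), map_smul] }
    have hσ : f.hom.comp σ = LinearMap.id := by
      apply LinearMap.ext
      intro m
      show f (e (Function.surjInv hf m)) = m
      rw [hfe, Function.surjInv_eq hf]
    have : Module.Projective (MonoidAlgebra k G) M := by
      haveI := hPmod
      exact Module.Projective.of_split σ f.hom hσ
    exact (IsProjective.iff_projective _).mp this

end
end

section
/- Let k be a commutative ring, G a group, and M a kG-module. Suppose that for every finitely generated subgroup S' ≤ G, the restriction res_{S'}^G M is a flat kS'-module. Then M is a flat kG-module. -/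
open CategoryTheory Limits
open scoped TensorProduct

noncomputable section

/-- The right `R`-module (i.e. `Rᵐᵒᵖ`-module) structure on the character module
`Hom_ℤ(M, ℚ/ℤ)` of a left `R`-module `M`, given by `(r • f) m = f (r • m)`. -/
instance charModuleModule (R : Type) [Ring R] (M : Type) [AddCommGroup M] [Module R M] :
    Module Rᵐᵒᵖ (CharacterModule M) where
  smul r f := (f : M →+ AddCircle (1:ℚ)).comp (DistribMulAction.toAddMonoidHom M r.unop)
  one_smul f := AddMonoidHom.ext (fun x => by
    show f ((1 : R) • x) = f x
    rw [one_smul])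
  mul_smul r s f := AddMonoidHom.ext (fun x => by
    show f ((r * s).unop • x) = f (s.unop • r.unop • x)
    rw [MulOpposite.unop_mul, mul_smul])
  smul_zero r := rfl
  smul_add r f g := rfl
  add_smul r s f := AddMonoidHom.ext (fun x => by
    show f ((r + s).unop • x) = f (r.unop • x) + f (s.unop • x)
    rw [MulOpposite.unop_add, add_smul, map_add])
  zero_smul f := AddMonoidHom.ext (fun x => by
    show f ((0 : R) • x) = 0
    rw [zero_smul, map_zero])

/-- A left module over an arbitrary ring is flat iff its character module (Pontryagin dual)
is an injective right module (Lambek's criterion); over a noncommutative ring we take this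
as the definition of flatness. -/
def ModuleFlat (R : Type) [Ring R] (M : ModuleCat R) : Prop :=
  Module.Injective Rᵐᵒᵖ (CharacterModule M)

set_option maxHeartbeats 2000000 in
/-- If the restriction of a `kG`-module `M` to every finitely generated subgroup `S' ≤ G` is
flat over `kS'`, then `M` is flat over `kG`. -/
theorem statement13 (k : Type) [CommRing k] (G : Type) [Group G]
    (M : ModuleCat (MonoidAlgebra k G))
    (h : ∀ S' : Subgroup G, S'.FG → ModuleFlat (MonoidAlgebra k S')
      ((ModuleCat.restrictScalars (MonoidAlgebra.mapDomainRingHom k S'.subtype)).obj M)) :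
    ModuleFlat (MonoidAlgebra k G) M := by
  classical
  show Module.Injective (MonoidAlgebra k G)ᵐᵒᵖ (CharacterModule M)
  apply Module.Baer.injective
  intro I f
  -- Key vanishing lemma, proved using flatness over a finitely generated subgroup.
  have key : ∀ s : Finset (↥I × ↑M),
      (∑ p ∈ s, (p.1 : (MonoidAlgebra k G)ᵐᵒᵖ).unop • p.2) = 0 →
      (∑ p ∈ s, f p.1 p.2) = 0 := by
    intro s hs
    set E : Finset G := s.sup (fun p => ((p.1 : (MonoidAlgebra k G)ᵐᵒᵖ).unop).coeff.support) with hE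
    set S' : Subgroup G := Subgroup.closure (E : Set G) with hS'
    have hFG : S'.FG := ⟨E, rfl⟩
    set ι := MonoidAlgebra.mapDomainRingHom k S'.subtype with hι
    have hinj : Module.Injective (MonoidAlgebra k S')ᵐᵒᵖ
        (CharacterModule ((ModuleCat.restrictScalars ι).obj M)) := h S' hFG
    set J : Ideal (MonoidAlgebra k S')ᵐᵒᵖ := I.comap (RingHom.op ι) with hJ
    let f' : J →ₗ[(MonoidAlgebra k S')ᵐᵒᵖ]
        CharacterModule ((ModuleCat.restrictScalars ι).obj M) :=
      { toFun := fun y => (f ⟨RingHom.op ι y.1, y.2⟩ :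
          CharacterModule ((ModuleCat.restrictScalars ι).obj M))
        map_add' := fun y z => by
          have e : (⟨RingHom.op ι ((y + z) : ↥J).1, (y + z).2⟩ : ↥I)
              = ⟨RingHom.op ι y.1, y.2⟩ + ⟨RingHom.op ι z.1, z.2⟩ :=
            Subtype.ext (by simp)
          show f ⟨RingHom.op ι ((y + z) : ↥J).1, (y + z).2⟩
              = f ⟨RingHom.op ι y.1, y.2⟩ + f ⟨RingHom.op ι z.1, z.2⟩
          rw [e, map_add]
        map_smul' := fun r y => by
          have e : (⟨RingHom.op ι ((r • y) : ↥J).1, (r • y).2⟩ : ↥I)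
              = RingHom.op ι r • ⟨RingHom.op ι y.1, y.2⟩ :=
            Subtype.ext (by simp [smul_eq_mul, map_mul])
          refine DFunLike.ext _ _ fun m => ?_
          show f ⟨RingHom.op ι ((r • y) : ↥J).1, (r • y).2⟩ m
              = f ⟨RingHom.op ι y.1, y.2⟩ (ι (MulOpposite.unop r) • m)
          rw [e, map_smul f]
          rfl }
    obtain ⟨F, hF⟩ := hinj.out J.subtype (Submodule.injective_subtype J) f'
    set c := F 1 with hcdef
    have hc : ∀ (y : ↥J) (m : ↑M), f ⟨RingHom.op ι y.1, y.2⟩ m = c (ι y.1.unop • m) := by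
      intro y m
      have h1 : F y.1 = f' y := hF y
      have h2 : F y.1 = y.1 • c := by
        rw [hcdef, ← F.map_smul, smul_eq_mul, mul_one]
      have h3 : f ⟨RingHom.op ι y.1, y.2⟩ m = f' y m := rfl
      rw [h3, ← h1, h2]
      rfl
    have main : ∀ p ∈ s, f p.1 p.2 = c ((p.1 : (MonoidAlgebra k G)ᵐᵒᵖ).unop • p.2) := by
      intro p hp
      have hsupp : (((p.1 : (MonoidAlgebra k G)ᵐᵒᵖ).unop).coeff.support : Set G)
          ⊆ Set.range S'.subtype := by
        intro z hz
        refine ⟨⟨z, Subgroup.subset_closure ?_⟩, rfl⟩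
        exact Finset.le_sup (f := fun p : ↥I × ↑M =>
          ((p.1 : (MonoidAlgebra k G)ᵐᵒᵖ).unop).coeff.support) hp hz
      set y0 : MonoidAlgebra k S' :=
        MonoidAlgebra.comapDomain S'.subtype S'.subtype_injective
          (p.1 : (MonoidAlgebra k G)ᵐᵒᵖ).unop with hy0def
      have hy0 : ι y0 = (p.1 : (MonoidAlgebra k G)ᵐᵒᵖ).unop :=
        MonoidAlgebra.mapDomain_comapDomain hsupp S'.subtype_injective
      have hop : RingHom.op ι (MulOpposite.op y0) = (p.1 : (MonoidAlgebra k G)ᵐᵒᵖ) := by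
        show MulOpposite.op (ι y0) = _
        rw [hy0, MulOpposite.op_unop]
      have hmem : MulOpposite.op y0 ∈ J := by
        show RingHom.op ι (MulOpposite.op y0) ∈ I
        rw [hop]; exact p.1.2
      have := hc ⟨MulOpposite.op y0, hmem⟩ p.2
      have hx : (⟨RingHom.op ι (MulOpposite.op y0), hmem⟩ : ↥I) = p.1 := Subtype.ext hop
      rw [hx] at this
      rw [this]
      congr 1
      show ι ((MulOpposite.op y0).unop) • p.2 = _
      rw [MulOpposite.unop_op, hy0]
    calc (∑ p ∈ s, f p.1 p.2)
        = ∑ p ∈ s, c ((p.1 : (MonoidAlgebra k G)ᵐᵒᵖ).unop • p.2) :=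
          Finset.sum_congr rfl main
      _ = c (∑ p ∈ s, (p.1 : (MonoidAlgebra k G)ᵐᵒᵖ).unop • p.2) := (map_sum c _ s).symm
      _ = 0 := by have := congrArg c hs; exact this.trans (map_zero c)
  -- Build the ℤ-bilinear pairing and factor through the image in M.
  let αb : ↥I →ₗ[ℤ] ↑M →ₗ[ℤ] ↑M :=
    AddMonoidHom.toIntLinearMap
    { toFun := fun x => AddMonoidHom.toIntLinearMap
        (DistribMulAction.toAddMonoidHom ↑M (x : (MonoidAlgebra k G)ᵐᵒᵖ).unop)
      map_zero' := LinearMap.ext fun m => by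
        show ((0 : ↥I) : (MonoidAlgebra k G)ᵐᵒᵖ).unop • m = 0
        rw [Submodule.coe_zero, MulOpposite.unop_zero, zero_smul]
      map_add' := fun x y => LinearMap.ext fun m => by
        show ((x + y : ↥I) : (MonoidAlgebra k G)ᵐᵒᵖ).unop • m = _
        rw [Submodule.coe_add, MulOpposite.unop_add, add_smul]
        rfl }
  let α : (↥I) ⊗[ℤ] ↑M →ₗ[ℤ] ↑M := TensorProduct.lift αb
  let βb : ↥I →ₗ[ℤ] ↑M →ₗ[ℤ] AddCircle (1:ℚ) :=
    AddMonoidHom.toIntLinearMap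
    { toFun := fun x => AddMonoidHom.toIntLinearMap (f x)
      map_zero' := LinearMap.ext fun m => by
        show f 0 m = (0 : ↑M →ₗ[ℤ] AddCircle (1:ℚ)) m
        rw [map_zero f]; rfl
      map_add' := fun x y => LinearMap.ext fun m => by
        show f (x + y) m = (AddMonoidHom.toIntLinearMap (f x)
          + AddMonoidHom.toIntLinearMap (f y)) m
        rw [map_add f]; rfl }
  let β : (↥I) ⊗[ℤ] ↑M →ₗ[ℤ] AddCircle (1:ℚ) := TensorProduct.lift βb
  have hker : LinearMap.ker α ≤ LinearMap.ker β := by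
    intro t ht
    rw [LinearMap.mem_ker] at ht ⊢
    obtain ⟨s, rfl⟩ := TensorProduct.exists_finset t
    rw [map_sum] at ht ⊢
    simp only [α, β, TensorProduct.lift.tmul] at ht ⊢
    exact key s ht
  let φ : ↥(LinearMap.range α) →ₗ[ℤ] AddCircle (1:ℚ) :=
    (Submodule.liftQ (LinearMap.ker α) β hker).comp
      (LinearMap.quotKerEquivRange α).symm.toLinearMap
  have hφ : ∀ t : (↥I) ⊗[ℤ] ↑M,
      φ ⟨α t, LinearMap.mem_range_self α t⟩ = β t := by
    intro t
    have h1 : (LinearMap.quotKerEquivRange α).symm ⟨α t, LinearMap.mem_range_self α t⟩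
        = Submodule.Quotient.mk t := by
      rw [LinearEquiv.symm_apply_eq]
      exact Subtype.ext (LinearMap.quotKerEquivRange_apply_mk α t).symm
    show (Submodule.liftQ (LinearMap.ker α) β hker)
        ((LinearMap.quotKerEquivRange α).symm ⟨α t, LinearMap.mem_range_self α t⟩) = β t
    rw [h1, Submodule.liftQ_apply]
  have hAC : Module.Injective ℤ (AddCircle (1:ℚ)) := (Module.Baer.of_divisible _).injective
  obtain ⟨g0, hg0⟩ := hAC.out (LinearMap.range α).subtype
    (Submodule.injective_subtype _) φ
  refine ⟨LinearMap.toSpanSingleton _ _ g0.toAddMonoidHom, fun x hx => ?_⟩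
  refine DFunLike.ext _ _ fun m => ?_
  show g0 (x.unop • m) = f ⟨x, hx⟩ m
  have ht : x.unop • m = α ((⟨x, hx⟩ : ↥I) ⊗ₜ[ℤ] m) := rfl
  rw [ht]
  have h2 := hg0 ⟨α ((⟨x, hx⟩ : ↥I) ⊗ₜ[ℤ] m), LinearMap.mem_range_self α _⟩
  rw [Submodule.coe_subtype] at h2
  rw [h2, hφ]
  rfl

end
end
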